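/- Let P and N be finite index sets, A a real P×N matrix, c_p > 0 for each p ∈ P, and d ∈ ℝ^N. Define the energy function G(h) = (2/3) ∑_{p∈P} |(A h)_p|^{3/2} / √(c_p) − ∑_{n∈N} d_n h_n for h ∈ ℝ^N. Suppose h̄ ∈ ℝ^N is such that the flow vector f ∈ ℝ^P defined by f_p = sign((A h̄)_p) · √(|(A h̄)_p| / c_p) satisfies Aᵀ f = d. Then h̄ is a global minimizer of G over ℝ^N, i.e., G(h) ≥ G(h̄) for all h ∈ ℝ^N. -/

import Mathlib

open Matrix

lemma scalar_grad_ineq (x y : ℝ) :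
    Real.sign x * Real.sqrt |x| * (y - x)
      ≤ (2/3) * |y| ^ ((3:ℝ)/2) - (2/3) * |x| ^ ((3:ℝ)/2) := by
  have hconj : (3:ℝ).HolderConjugate (3/2) := Real.holderConjugate_iff.mpr ⟨by norm_num, by norm_num⟩
  have hY : Real.sqrt |x| * y ≤ |x| ^ ((3:ℝ)/2) / 3 + (2/3) * |y| ^ ((3:ℝ)/2) := by
    have := Real.young_inequality_of_nonneg (Real.sqrt_nonneg |x|) (abs_nonneg y) hconj
    calc Real.sqrt |x| * y ≤ Real.sqrt |x| * |y| := by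
          have := le_abs_self y
          nlinarith [Real.sqrt_nonneg |x|]
      _ ≤ Real.sqrt |x| ^ (3:ℝ) / 3 + |y| ^ ((3:ℝ)/2) / (3/2) := this
      _ = |x| ^ ((3:ℝ)/2) / 3 + (2/3) * |y| ^ ((3:ℝ)/2) := by
          rw [Real.sqrt_eq_rpow, ← Real.rpow_mul (abs_nonneg x)]
          norm_num
          ring
  have hsx : Real.sign x * x = |x| := by
    rcases lt_trichotomy x 0 with h | h | h
    · rw [Real.sign_of_neg h, abs_of_neg h]; ring
    · simp [h]
    · rw [Real.sign_of_pos h, abs_of_pos h]; ring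
  have hxx : Real.sqrt |x| * |x| = |x| ^ ((3:ℝ)/2) := by
    nth_rewrite 2 [← Real.rpow_one |x|]
    rw [Real.sqrt_eq_rpow, ← Real.rpow_add' (abs_nonneg x) (by norm_num)]
    norm_num
  have hsign : Real.sign x * Real.sqrt |x| * y ≤ Real.sqrt |x| * y ∨ True := Or.inr trivial
  -- bound sign x * √|x| * y ≤ √|x| * |y| ≤ ...
  have hY2 : Real.sign x * Real.sqrt |x| * y ≤ |x| ^ ((3:ℝ)/2) / 3 + (2/3) * |y| ^ ((3:ℝ)/2) := by
    have h1 : Real.sign x * Real.sqrt |x| * y ≤ Real.sqrt |x| * |y| := by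
      have hs : |Real.sign x| ≤ 1 := by
        rcases lt_trichotomy x 0 with h | h | h <;>
          simp [Real.sign_of_neg, Real.sign_of_pos, h]
      calc Real.sign x * Real.sqrt |x| * y ≤ |Real.sign x * Real.sqrt |x| * y| := le_abs_self _
        _ = |Real.sign x| * Real.sqrt |x| * |y| := by
            rw [abs_mul, abs_mul, abs_of_nonneg (Real.sqrt_nonneg _)]
        _ ≤ 1 * Real.sqrt |x| * |y| := by
            nlinarith [mul_nonneg (Real.sqrt_nonneg |x|) (abs_nonneg y), hs]
        _ = Real.sqrt |x| * |y| := by ring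
    have h2 : Real.sqrt |x| * |y| ≤ |x| ^ ((3:ℝ)/2) / 3 + (2/3) * |y| ^ ((3:ℝ)/2) := by
      have := Real.young_inequality_of_nonneg (Real.sqrt_nonneg |x|) (abs_nonneg y) hconj
      calc Real.sqrt |x| * |y| ≤ Real.sqrt |x| ^ (3:ℝ) / 3 + |y| ^ ((3:ℝ)/2) / (3/2) := this
        _ = |x| ^ ((3:ℝ)/2) / 3 + (2/3) * |y| ^ ((3:ℝ)/2) := by
            rw [Real.sqrt_eq_rpow, ← Real.rpow_mul (abs_nonneg x)]
            norm_num; ring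
    linarith
  have expand : Real.sign x * Real.sqrt |x| * (y - x)
      = Real.sign x * Real.sqrt |x| * y - Real.sqrt |x| * |x| := by
    rw [mul_sub]
    congr 1
    rw [← hsx]; ring
  rw [expand, hxx]
  linarith

theorem pressure_energy_global_min {P N : Type*} [Fintype P] [Fintype N]
    (A : Matrix P N ℝ) (c : P → ℝ) (hc : ∀ p, 0 < c p) (d : N → ℝ)
    (hbar : N → ℝ)
    (hfeas : Aᵀ.mulVec
      (fun p => Real.sign (A.mulVec hbar p) * Real.sqrt (|A.mulVec hbar p| / c p)) = d) :
    ∀ h : N → ℝ,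
      (2 / 3) * ∑ p, |A.mulVec hbar p| ^ ((3 : ℝ) / 2) / Real.sqrt (c p)
          - ∑ n, d n * hbar n
        ≤ (2 / 3) * ∑ p, |A.mulVec h p| ^ ((3 : ℝ) / 2) / Real.sqrt (c p)
          - ∑ n, d n * h n := by
  intro h
  set f : P → ℝ := fun p =>
    Real.sign (A.mulVec hbar p) * Real.sqrt (|A.mulVec hbar p| / c p) with hf
  have hdot : ∑ n, d n * h n - ∑ n, d n * hbar n
      = ∑ p, f p * (A.mulVec h p - A.mulVec hbar p) := by
    have h1 : ∀ v : N → ℝ, ∑ n, d n * v n = ∑ p, f p * A.mulVec v p := by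
      intro v
      have : d ⬝ᵥ v = f ⬝ᵥ A.mulVec v := by
        rw [← hfeas, Matrix.mulVec_transpose, ← Matrix.dotProduct_mulVec]
      simpa [dotProduct] using this
    rw [h1 h, h1 hbar, ← Finset.sum_sub_distrib]
    simp [mul_sub]
  have hterm : ∀ p, f p * (A.mulVec h p - A.mulVec hbar p)
      ≤ (2/3) * |A.mulVec h p| ^ ((3:ℝ)/2) / Real.sqrt (c p)
        - (2/3) * |A.mulVec hbar p| ^ ((3:ℝ)/2) / Real.sqrt (c p) := by
    intro p
    have hcp : 0 < Real.sqrt (c p) := Real.sqrt_pos.mpr (hc p)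
    have hfp : f p = Real.sign (A.mulVec hbar p) * Real.sqrt |A.mulVec hbar p|
        / Real.sqrt (c p) := by
      rw [hf]
      simp only
      rw [Real.sqrt_div (abs_nonneg _)]
      ring
    calc f p * (A.mulVec h p - A.mulVec hbar p)
        = Real.sign (A.mulVec hbar p) * Real.sqrt |A.mulVec hbar p|
            * (A.mulVec h p - A.mulVec hbar p) / Real.sqrt (c p) := by
          rw [hfp]; ring
      _ ≤ ((2/3) * |A.mulVec h p| ^ ((3:ℝ)/2)
            - (2/3) * |A.mulVec hbar p| ^ ((3:ℝ)/2)) / Real.sqrt (c p) := by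
          gcongr
          exact scalar_grad_ineq _ _
      _ = (2/3) * |A.mulVec h p| ^ ((3:ℝ)/2) / Real.sqrt (c p)
            - (2/3) * |A.mulVec hbar p| ^ ((3:ℝ)/2) / Real.sqrt (c p) := by
          ring
  calc (2 / 3) * ∑ p, |A.mulVec hbar p| ^ ((3 : ℝ) / 2) / Real.sqrt (c p)
          - ∑ n, d n * hbar n
      = (2 / 3) * ∑ p, |A.mulVec hbar p| ^ ((3 : ℝ) / 2) / Real.sqrt (c p)
          + (∑ n, d n * h n - ∑ n, d n * hbar n) - ∑ n, d n * h n := by ring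
    _ ≤ (2 / 3) * ∑ p, |A.mulVec hbar p| ^ ((3 : ℝ) / 2) / Real.sqrt (c p)
          + (∑ p, ((2/3) * |A.mulVec h p| ^ ((3:ℝ)/2) / Real.sqrt (c p)
            - (2/3) * |A.mulVec hbar p| ^ ((3:ℝ)/2) / Real.sqrt (c p)))
          - ∑ n, d n * h n := by
        rw [hdot]
        have := Finset.sum_le_sum (fun p (_ : p ∈ Finset.univ) => hterm p)
        linarith
    _ = (2 / 3) * ∑ p, |A.mulVec h p| ^ ((3 : ℝ) / 2) / Real.sqrt (c p)
          - ∑ n, d n * h n := by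
        rw [Finset.sum_sub_distrib]
        rw [Finset.mul_sum, Finset.mul_sum]
        simp only [mul_div_assoc]
        ring
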